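/- For all positive integers m and n with m > n, the free abelian group ℤ^m admits an n-tuple of right-invariant linear orders which is generic (i.e., is the generic n-order on a countable set). -/

import Mathlib

open Finset

lemma aux_small_comb (n m : ℕ) (hnm : n < m) (a : Fin n → Fin m → ℝ)
    (ε : ℝ) (hε : 0 < ε) :
    ∃ w : Fin m → ℤ, w ≠ 0 ∧ ∀ i, |∑ j, a i j * (w j : ℝ)| < ε := by
  classical
  have hm : 0 < m := lt_of_le_of_lt (Nat.zero_le n) hnm
  set B : ℝ := 1 + ∑ i, ∑ j, |a i j| with hBdef
  have hsum0 : 0 ≤ ∑ i, ∑ j, |a i j| :=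
    Finset.sum_nonneg fun i _ => Finset.sum_nonneg fun j _ => abs_nonneg _
  have hB1 : 1 ≤ B := by rw [hBdef]; linarith
  have hBpos : 0 < B := lt_of_lt_of_le one_pos hB1
  have hBij : ∀ i j, |a i j| ≤ B := by
    intro i j
    have h1 : |a i j| ≤ ∑ j', |a i j'| :=
      Finset.single_le_sum (f := fun j' => |a i j'|) (fun j' _ => abs_nonneg _) (Finset.mem_univ j)
    have h2 : (∑ j', |a i j'|) ≤ ∑ i', ∑ j', |a i' j'| :=
      Finset.single_le_sum (f := fun i' => ∑ j', |a i' j'|)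
        (fun i' _ => Finset.sum_nonneg fun j' _ => abs_nonneg _) (Finset.mem_univ i)
    rw [hBdef]; linarith
  set c : ℕ := ⌈2 * m * B / ε⌉₊ + 2 with hcdef
  set Q : ℕ := c ^ n + 1 with hQdef
  have hQ1 : 1 ≤ Q := Nat.succ_le_succ (Nat.zero_le _)
  have hQR : (0:ℝ) < Q := by exact_mod_cast hQ1
  set R : ℝ := m * B * Q with hRdef
  have hRpos : 0 < R := by
    have hmR : (0:ℝ) < m := by exact_mod_cast hm
    rw [hRdef]; positivity
  set lo : ℤ := ⌊(-R) / ε⌋ with hlodef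
  set hi : ℤ := ⌊R / ε⌋ with hhidef
  set T : Finset (Fin n → ℤ) := Fintype.piFinset fun _ => Finset.Icc lo hi with hTdef
  have hmaps : ∀ w : Fin m → Fin Q,
      (fun i => ⌊(∑ j, a i j * ((w j : ℕ) : ℝ)) / ε⌋) ∈ T := by
    intro w
    rw [hTdef, Fintype.mem_piFinset]
    intro i
    have habs : |∑ j, a i j * ((w j : ℕ) : ℝ)| ≤ R := by
      calc |∑ j, a i j * ((w j : ℕ) : ℝ)| ≤ ∑ j, |a i j * ((w j : ℕ) : ℝ)| :=
            Finset.abs_sum_le_sum_abs _ _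
        _ ≤ ∑ _j : Fin m, B * Q := by
            refine Finset.sum_le_sum fun j _ => ?_
            rw [abs_mul]
            have hw : |((w j : ℕ) : ℝ)| ≤ Q := by
              rw [abs_of_nonneg (by positivity)]
              exact_mod_cast (w j).2.le
            exact mul_le_mul (hBij i j) hw (abs_nonneg _) hBpos.le
        _ = R := by
            rw [Finset.sum_const, Finset.card_univ, Fintype.card_fin, nsmul_eq_mul, hRdef]; ring
    obtain ⟨h1, h2⟩ := abs_le.mp habs
    rw [Finset.mem_Icc]
    constructor
    · rw [hlodef]
      exact Int.floor_mono (by gcongr)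
    · rw [hhidef]
      exact Int.floor_mono (by gcongr)
  have hIcc : (Finset.Icc lo hi).card ≤ c * Q := by
    have h1 : (hi : ℝ) ≤ R / ε := Int.floor_le _
    have h2 : (-R) / ε - 1 < (lo : ℝ) := Int.sub_one_lt_floor _
    have hc2 : 2 * m * B / ε + 2 ≤ (c:ℝ) := by
      have h := Nat.le_ceil (2 * m * B / ε)
      rw [hcdef]; push_cast; linarith
    have hkey : (hi:ℝ) + 1 - lo ≤ (c:ℝ) * Q := by
      have e1 : (2 * m * B / ε + 2) * Q ≤ (c:ℝ) * Q :=
        mul_le_mul_of_nonneg_right hc2 hQR.le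
      have e2 : (2 * (m:ℝ) * B / ε + 2) * Q = 2 * (R / ε) + 2 * Q := by
        rw [hRdef]; field_simp
      have hQ1R : (1:ℝ) ≤ Q := by exact_mod_cast hQ1
      have e3 : (2:ℝ) ≤ 2 * Q := by linarith
      have e4 : (-R)/ε = -(R/ε) := by ring
      rw [e4] at h2
      linarith
    have hZ : (hi + 1 - lo : ℤ) ≤ ((c * Q : ℕ) : ℤ) := by exact_mod_cast hkey
    rw [Int.card_Icc]
    exact Int.toNat_le.mpr hZ
  have hTcard : T.card < (Finset.univ : Finset (Fin m → Fin Q)).card := by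
    have h1 : T.card ≤ (c * Q) ^ n := by
      rw [hTdef, Fintype.card_piFinset]
      calc (∏ _i : Fin n, (Finset.Icc lo hi).card) ≤ ∏ _i : Fin n, (c * Q) :=
            Finset.prod_le_prod' fun i _ => hIcc
        _ = (c * Q) ^ n := by rw [Finset.prod_const, Finset.card_univ, Fintype.card_fin]
    have hQn : 0 < Q ^ n := Nat.pow_pos (lt_of_lt_of_le one_pos hQ1)
    have h2 : (c * Q) ^ n < Q ^ (n + 1) := by
      rw [mul_pow, pow_succ]
      have hcQ : c ^ n < Q := by rw [hQdef]; omega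
      calc c ^ n * Q ^ n < Q * Q ^ n := by
            exact Nat.mul_lt_mul_of_lt_of_le hcQ (le_refl _) hQn
        _ = Q ^ n * Q := Nat.mul_comm _ _
    have h3 : Q ^ (n+1) ≤ Q ^ m := Nat.pow_le_pow_right hQ1 (Nat.succ_le_of_lt hnm)
    have h4 : (Finset.univ : Finset (Fin m → Fin Q)).card = Q ^ m := by
      rw [Finset.card_univ]; simp
    omega
  obtain ⟨x, -, y, -, hxy, hfeq⟩ :=
    Finset.exists_ne_map_eq_of_card_lt_of_maps_to hTcard (fun w _ => hmaps w)
  refine ⟨fun j => ((x j : ℕ) : ℤ) - ((y j : ℕ) : ℤ), ?_, ?_⟩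
  · intro h0
    apply hxy
    funext j
    have hj := congrFun h0 j
    simp only [Pi.zero_apply] at hj
    have hval : ((x j : ℕ) : ℤ) = ((y j : ℕ) : ℤ) := by omega
    exact Fin.ext (by exact_mod_cast hval)
  · intro i
    have heq : ⌊(∑ j, a i j * ((x j : ℕ) : ℝ)) / ε⌋ = ⌊(∑ j, a i j * ((y j : ℕ) : ℝ)) / ε⌋ :=
      congrFun hfeq i
    set vx : ℝ := ∑ j, a i j * ((x j : ℕ) : ℝ) with hvx
    set vy : ℝ := ∑ j, a i j * ((y j : ℕ) : ℝ) with hvy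
    have hsum : (∑ j, a i j * ((((x j : ℕ) : ℤ) - ((y j : ℕ) : ℤ) : ℤ) : ℝ)) = vx - vy := by
      rw [hvx, hvy, ← Finset.sum_sub_distrib]
      refine Finset.sum_congr rfl fun j _ => ?_
      push_cast
      ring
    have hx1 : (⌊vx / ε⌋ : ℝ) ≤ vx / ε := Int.floor_le _
    have hx2 : vx / ε < ⌊vx / ε⌋ + 1 := Int.lt_floor_add_one _
    have hy1 : (⌊vy / ε⌋ : ℝ) ≤ vy / ε := Int.floor_le _
    have hy2 : vy / ε < ⌊vy / ε⌋ + 1 := Int.lt_floor_add_one _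
    have heqR : (⌊vx / ε⌋ : ℝ) = (⌊vy / ε⌋ : ℝ) := by exact_mod_cast heq
    have key : |vx - vy| < ε := by
      rw [abs_sub_lt_iff]
      constructor
      · have hd : (vx - vy) / ε < 1 := by rw [sub_div]; linarith
        calc vx - vy = (vx - vy)/ε * ε := by field_simp
          _ < 1 * ε := mul_lt_mul_of_pos_right hd hε
          _ = ε := one_mul _
      · have hd : (vy - vx) / ε < 1 := by rw [sub_div]; linarith
        calc vy - vx = (vy - vx)/ε * ε := by field_simp
          _ < 1 * ε := mul_lt_mul_of_pos_right hd hε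
          _ = ε := one_mul _
    calc |∑ j, a i j * ((((x j : ℕ) : ℤ) - ((y j : ℕ) : ℤ) : ℤ) : ℝ)| = |vx - vy| := by rw [hsum]
      _ < ε := key

lemma aux_big (n m : ℕ) (hn : 0 < n) (hnm : n < m) (a : Fin n → Fin m → ℝ)
    (L : ℕ) (hL : 1 ≤ L) :
    ∃ w : Fin m → ℤ, (∃ j₀, (L : ℝ) ≤ |(w j₀ : ℝ)|) ∧ ∀ i, |∑ j, a i j * (w j : ℝ)| < 1 := by
  classical
  have hm : 0 < m := lt_of_le_of_lt (Nat.zero_le n) hnm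
  haveI : Nonempty (Fin n) := ⟨⟨0, hn⟩⟩
  set F : Finset (Fin m → ℤ) :=
    (Fintype.piFinset fun _ : Fin m => Finset.Icc (-(L:ℤ)) (L:ℤ)).erase 0 with hFdef
  by_cases hker : ∃ w ∈ F, ∀ i, (∑ j, a i j * (w j : ℝ)) = 0
  · obtain ⟨w, hwF, hw0⟩ := hker
    have hwne : w ≠ 0 := (Finset.mem_erase.mp hwF).1
    obtain ⟨j₀, hj₀⟩ := Function.ne_iff.mp hwne
    have hj₀' : w j₀ ≠ 0 := by simpa using hj₀
    refine ⟨fun j => (L:ℤ) * w j, ⟨j₀, ?_⟩, ?_⟩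
    · have h1 : (1:ℤ) ≤ |w j₀| := Int.one_le_abs hj₀'
      have h1R : (1:ℝ) ≤ |(w j₀ : ℝ)| := by
        rw [← Int.cast_abs]; exact_mod_cast h1
      have hLR : (0:ℝ) ≤ (L:ℝ) := by positivity
      push_cast
      rw [abs_mul, abs_of_nonneg hLR]
      nlinarith
    · intro i
      have hmul : (∑ j, a i j * (((L:ℤ) * w j : ℤ) : ℝ)) = (L:ℝ) * ∑ j, a i j * (w j:ℝ) := by
        rw [Finset.mul_sum]
        refine Finset.sum_congr rfl fun j _ => ?_
        push_cast
        ring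
      rw [hmul, hw0 i, mul_zero, abs_zero]
      exact one_pos
  · push_neg at hker
    have hFne : F.Nonempty := by
      refine ⟨fun _ => 1, ?_⟩
      rw [hFdef, Finset.mem_erase]
      constructor
      · intro h
        have := congrFun h ⟨0, hm⟩
        simp at this
      · rw [Fintype.mem_piFinset]
        intro j
        rw [Finset.mem_Icc]
        have : (1:ℤ) ≤ (L:ℤ) := by exact_mod_cast hL
        omega
    have hNne : (Finset.univ : Finset (Fin n)).Nonempty := Finset.univ_nonempty
    set g : (Fin m → ℤ) → ℝ :=
      fun w => Finset.univ.sup' hNne fun i => |∑ j, a i j * (w j : ℝ)| with hg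
    have hgpos : ∀ w ∈ F, 0 < g w := by
      intro w hwF
      obtain ⟨i, hi⟩ := hker w hwF
      have hle : |∑ j, a i j * (w j : ℝ)| ≤ g w :=
        Finset.le_sup' (f := fun i => |∑ j, a i j * (w j : ℝ)|) (Finset.mem_univ i)
      exact lt_of_lt_of_le (abs_pos.mpr hi) hle
    set εm : ℝ := F.inf' hFne g with hεm
    have hεmpos : 0 < εm := (Finset.lt_inf'_iff hFne).mpr hgpos
    obtain ⟨w, hwne, hw⟩ := aux_small_comb n m hnm a (min εm 1) (lt_min hεmpos one_pos)
    refine ⟨w, ?_, fun i => lt_of_lt_of_le (hw i) (min_le_right _ _)⟩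
    by_contra hcon
    push_neg at hcon
    have hwF : w ∈ F := by
      rw [hFdef, Finset.mem_erase]
      refine ⟨hwne, ?_⟩
      rw [Fintype.mem_piFinset]
      intro j
      rw [Finset.mem_Icc]
      have h := hcon j
      have h2 : |w j| < (L:ℤ) := by
        have : ((|w j| : ℤ) : ℝ) < (L:ℝ) := by rw [Int.cast_abs]; exact h
        exact_mod_cast this
      have := abs_lt.mp h2
      omega
    have h1 : εm ≤ g w := Finset.inf'_le g hwF
    have h2 : g w < εm := by
      rw [hg]
      refine (Finset.sup'_lt_iff hNne).mpr fun i _ => ?_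
      exact lt_of_lt_of_le (hw i) (min_le_left _ _)
    linarith
lemma aux_matrix (n m : ℕ) (hn : 0 < n) (hnm : n < m) :
    ∃ A : Fin n → Fin m → ℝ,
      (∀ c : Fin m → ℤ, c ≠ 0 → ∀ i, (∑ j, A i j * (c j : ℝ)) ≠ 0) ∧
      (∀ (t : Fin n → ℚ) (ε : ℚ), 0 < ε → ∃ w : Fin m → ℤ,
        ∀ i, |(∑ j, A i j * (w j : ℝ)) - (t i : ℝ)| < (ε : ℝ)) := by
  classical
  haveI : Nonempty (Fin n) := ⟨⟨0, hn⟩⟩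
  let U : Fin n × (Fin m → ℤ) → Set (Fin n → Fin m → ℝ) := fun p =>
    {A | p.2 = 0 ∨ (∑ j, A p.1 j * (p.2 j : ℝ)) ≠ 0}
  let V : (Fin n → ℚ) × ℚ → Set (Fin n → Fin m → ℝ) := fun p =>
    {A | 0 < p.2 → ∃ w : Fin m → ℤ,
      ∀ i, |(∑ j, A i j * (w j : ℝ)) - (p.1 i : ℝ)| < (p.2 : ℝ)}
  have hUopen : ∀ p, IsOpen (U p) := by
    rintro ⟨i, c⟩
    by_cases hc : c = 0
    · have huniv : U (i, c) = Set.univ := by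
        ext A; simp [U, hc]
      rw [huniv]; exact isOpen_univ
    · have hcont : Continuous fun A : Fin n → Fin m → ℝ => ∑ j, A i j * (c j : ℝ) :=
        continuous_finset_sum _ fun j _ =>
          (by fun_prop)
      have hset : U (i, c)
          = (fun A : Fin n → Fin m → ℝ => ∑ j, A i j * (c j : ℝ)) ⁻¹' {x | x ≠ 0} := by
        ext A; simp [U, hc]
      rw [hset]
      exact IsOpen.preimage hcont isOpen_ne
  have hVopen : ∀ p, IsOpen (V p) := by
    rintro ⟨t, ε⟩
    by_cases hε : 0 < ε
    · have hset : V (t, ε) = ⋃ w : Fin m → ℤ, ⋂ i : Fin n,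
          {A : Fin n → Fin m → ℝ | |(∑ j, A i j * (w j : ℝ)) - (t i : ℝ)| < (ε : ℝ)} := by
        ext A
        simp only [V, Set.mem_setOf_eq, Set.mem_iUnion, Set.mem_iInter]
        constructor
        · intro h; exact h hε
        · intro h _; exact h
      rw [hset]
      refine isOpen_iUnion fun w => isOpen_iInter_of_finite fun i => ?_
      have hcont : Continuous fun A : Fin n → Fin m → ℝ =>
          |(∑ j, A i j * (w j : ℝ)) - (t i : ℝ)| :=
        (Continuous.sub (continuous_finset_sum _ fun j _ =>
          ((continuous_apply j).comp (continuous_apply i)).mul continuous_const)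
          continuous_const).abs
      exact isOpen_lt hcont continuous_const
    · have huniv : V (t, ε) = Set.univ :=
        Set.eq_univ_of_forall fun A h => absurd h hε
      rw [huniv]; exact isOpen_univ
  have hUdense : ∀ p, Dense (U p) := by
    rintro ⟨i, c⟩
    rw [Metric.dense_iff]
    intro A r hr
    by_cases hc : c = 0
    · exact ⟨A, Metric.mem_ball_self hr, Or.inl hc⟩
    · by_cases hz : (∑ j, A i j * (c j : ℝ)) ≠ 0
      · exact ⟨A, Metric.mem_ball_self hr, Or.inr hz⟩
      · push_neg at hz
        obtain ⟨j₀, hj₀⟩ := Function.ne_iff.mp hc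
        have hj₀' : c j₀ ≠ 0 := by simpa using hj₀
        set A' : Fin n → Fin m → ℝ :=
          fun i' j => A i' j + (if i' = i ∧ j = j₀ then r/2 else 0) with hA'
        have hsum : (∑ j, A' i j * (c j : ℝ))
            = (∑ j, A i j * (c j : ℝ)) + (r/2) * (c j₀ : ℝ) := by
          have hterm : ∀ j : Fin m, A' i j * (c j:ℝ)
              = A i j * (c j:ℝ) + (if j = j₀ then (r/2) * (c j:ℝ) else 0) := by
            intro j
            by_cases hj : j = j₀ <;> simp [hA', hj] <;> ring
          rw [Finset.sum_congr rfl fun j _ => hterm j, Finset.sum_add_distrib]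
          congr 1
          rw [Finset.sum_ite_eq' Finset.univ j₀ (fun j => (r/2) * (c j:ℝ))]
          simp
        refine ⟨A', ?_, ?_⟩
        · rw [Metric.mem_ball, dist_pi_lt_iff hr]
          intro i'
          rw [dist_pi_lt_iff hr]
          intro j
          rw [Real.dist_eq]
          have hdiff : A' i' j - A i' j = (if i' = i ∧ j = j₀ then r/2 else 0) := by
            simp [hA']
          rw [hdiff]
          by_cases hij : i' = i ∧ j = j₀
          · rw [if_pos hij, abs_of_pos (by linarith)]; linarith
          · rw [if_neg hij, abs_zero]; linarith
        · exact Or.inr (by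
            rw [hsum, hz, zero_add]
            exact mul_ne_zero (by linarith) (by exact_mod_cast hj₀'))
  have hVdense : ∀ p, Dense (V p) := by
    rintro ⟨t, ε⟩
    by_cases hε : 0 < ε
    · rw [Metric.dense_iff]
      intro A r hr
      set Tt : ℝ := ∑ i, |(t i : ℝ)| with hTt
      have hTt0 : 0 ≤ Tt := Finset.sum_nonneg fun i _ => abs_nonneg _
      set L : ℕ := ⌈(Tt + 1) / (r / 2)⌉₊ + 1 with hLdef
      have hL1 : 1 ≤ L := Nat.succ_le_succ (Nat.zero_le _)
      have hLpos : (0:ℝ) < L := by exact_mod_cast hL1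
      have hLne : (L:ℝ) ≠ 0 := ne_of_gt hLpos
      obtain ⟨w, ⟨j₀, hj₀⟩, hwdot⟩ := aux_big n m hn hnm A L hL1
      set S : ℝ := ∑ j, ((w j : ℝ))^2 with hS
      have hSj : ∀ j, ((w j:ℝ))^2 ≤ S := fun j =>
        Finset.single_le_sum (f := fun j => ((w j:ℝ))^2) (fun _ _ => sq_nonneg _)
          (Finset.mem_univ j)
      have hLsq : (L:ℝ)^2 ≤ ((w j₀:ℝ))^2 := by
        have h0 := abs_nonneg ((w j₀:ℝ))
        nlinarith [sq_abs ((w j₀:ℝ))]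
      have hSL : (L:ℝ)^2 ≤ S := le_trans hLsq (hSj j₀)
      have hSpos : 0 < S := lt_of_lt_of_le (by positivity) hSL
      set A' : Fin n → Fin m → ℝ :=
        fun i j => A i j + ((t i : ℝ) - ∑ j', A i j' * (w j' : ℝ)) * (w j : ℝ) / S with hA'
      have hdotA' : ∀ i, (∑ j, A' i j * (w j : ℝ)) = (t i : ℝ) := by
        intro i
        have expand : ∀ j : Fin m, A' i j * (w j:ℝ)
            = A i j * (w j:ℝ)
              + ((t i : ℝ) - ∑ j', A i j' * (w j' : ℝ))/S * ((w j:ℝ))^2 := by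
          intro j; simp only [hA']; ring
        rw [Finset.sum_congr rfl fun j _ => expand j, Finset.sum_add_distrib,
          ← Finset.mul_sum, ← hS, div_mul_cancel₀ _ (ne_of_gt hSpos)]
        ring
      refine ⟨A', ?_, ?_⟩
      · rw [Metric.mem_ball, dist_pi_lt_iff hr]
        intro i
        rw [dist_pi_lt_iff hr]
        intro j
        rw [Real.dist_eq]
        have hdiff : A' i j - A i j
            = ((t i : ℝ) - ∑ j', A i j' * (w j' : ℝ)) * (w j : ℝ) / S := by
          simp only [hA']; ring
        rw [hdiff]
        have hti : |(t i:ℝ)| ≤ Tt :=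
          Finset.single_le_sum (f := fun i => |(t i:ℝ)|) (fun _ _ => abs_nonneg _)
            (Finset.mem_univ i)
        have hdi : |(t i : ℝ) - ∑ j', A i j' * (w j' : ℝ)| < Tt + 1 := by
          have h2 := hwdot i
          have htri : |(t i:ℝ) - ∑ j', A i j' * (w j':ℝ)|
              ≤ |(t i:ℝ)| + |∑ j', A i j' * (w j':ℝ)| := by
            rw [sub_eq_add_neg]
            exact le_trans (abs_add_le _ _) (by rw [abs_neg])
          linarith
        have hwjS : |(w j : ℝ)| / S ≤ 1 / (L:ℝ) := by
          rcases le_or_gt |(w j:ℝ)| (L:ℝ) with h | h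
          · calc |(w j:ℝ)|/S ≤ (L:ℝ)/S := by gcongr
              _ ≤ (L:ℝ)/((L:ℝ))^2 := by gcongr
              _ = 1/(L:ℝ) := by
                  rw [pow_two, div_mul_eq_div_div, div_self hLne]
          · have hwj0 : (0:ℝ) < |(w j:ℝ)| := lt_trans hLpos h
            have hwne : |(w j:ℝ)| ≠ 0 := ne_of_gt hwj0
            have hsqpos : (0:ℝ) < ((w j:ℝ))^2 := by
              nlinarith [sq_abs ((w j:ℝ))]
            calc |(w j:ℝ)|/S ≤ |(w j:ℝ)|/((w j:ℝ))^2 := by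
                  rw [div_le_div_iff₀ hSpos hsqpos]
                  exact mul_le_mul_of_nonneg_left (hSj j) (abs_nonneg _)
              _ = 1/|(w j:ℝ)| := by
                  rw [← sq_abs, pow_two, div_mul_eq_div_div, div_self hwne]
              _ ≤ 1/(L:ℝ) := one_div_le_one_div_of_le hLpos h.le
        have hLbig : (Tt + 1)/(L:ℝ) < r := by
          have hr2 : 0 < r/2 := by linarith
          have h1 : (Tt + 1)/(r/2) ≤ ((⌈(Tt+1)/(r/2)⌉₊ : ℕ) : ℝ) := Nat.le_ceil _
          have h2 : ((⌈(Tt+1)/(r/2)⌉₊ : ℕ) : ℝ) + 1 = (L:ℝ) := by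
            rw [hLdef]; push_cast; ring
          have h3 : (Tt+1)/(r/2) < (L:ℝ) := by linarith
          have h4 : Tt + 1 < (L:ℝ) * (r/2) := by
            rw [div_lt_iff₀ hr2] at h3; linarith
          rw [div_lt_iff₀ hLpos]
          nlinarith
        calc |((t i : ℝ) - ∑ j', A i j' * (w j' : ℝ)) * (w j : ℝ) / S|
            = |(t i : ℝ) - ∑ j', A i j' * (w j' : ℝ)| * (|(w j:ℝ)| / S) := by
              rw [abs_div, abs_mul, abs_of_pos hSpos, mul_div_assoc]
          _ ≤ (Tt + 1) * (1/(L:ℝ)) := by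
              refine mul_le_mul hdi.le hwjS (by positivity) (by linarith)
          _ = (Tt+1)/(L:ℝ) := by ring
          _ < r := hLbig
      · intro _
        exact ⟨w, fun i => by
          rw [hdotA' i, sub_self, abs_zero]
          exact_mod_cast hε⟩
    · have huniv : V (t, ε) = Set.univ :=
        Set.eq_univ_of_forall fun A h => absurd h hε
      rw [huniv]; exact dense_univ
  have hD : Dense (⋂ s : (Fin n × (Fin m → ℤ)) ⊕ ((Fin n → ℚ) × ℚ), Sum.elim U V s) :=
    dense_iInter_of_isOpen
      (by rintro (p | p)
          · exact hUopen p
          · exact hVopen p)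
      (by rintro (p | p)
          · exact hUdense p
          · exact hVdense p)
  obtain ⟨A, hA⟩ := hD.nonempty
  rw [Set.mem_iInter] at hA
  refine ⟨A, ?_, ?_⟩
  · intro c hc i
    have h : c = 0 ∨ (∑ j, A i j * (c j : ℝ)) ≠ 0 := hA (Sum.inl (i, c))
    exact h.resolve_left hc
  · intro t ε hε
    have h : 0 < ε → ∃ w : Fin m → ℤ,
        ∀ i, |(∑ j, A i j * (w j : ℝ)) - (t i : ℝ)| < (ε : ℝ) := hA (Sum.inr (t, ε))
    exact h hε

/-- For positive integers `m > n`, the free abelian group `ℤ^m` admits a generic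
`n`-tuple of right-invariant linear orders. -/
theorem stmt_12 (m n : ℕ) (hn : 0 < n) (hmn : n < m) :
    ∃ lt : Fin n → (Fin m → ℤ) → (Fin m → ℤ) → Prop,
      (∀ i, IsStrictTotalOrder (Fin m → ℤ) (lt i)) ∧
      (∀ i, ∀ x y g : Fin m → ℤ, lt i x y → lt i (x + g) (y + g)) ∧
      (∀ x y : Fin n → (Fin m → ℤ), (∀ i, lt i (x i) (y i)) →
        ∃ z : Fin m → ℤ, ∀ i, lt i (x i) z ∧ lt i z (y i)) := by
  classical
  obtain ⟨A, hinj, hdense⟩ := aux_matrix n m hn hmn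
  refine ⟨fun i x y => (∑ j, A i j * (x j : ℝ)) < ∑ j, A i j * (y j : ℝ), ?_, ?_, ?_⟩
  · intro i
    exact {
      trichotomous := by
        intro x y
        rcases eq_or_ne x y with rfl | hne
        · exact fun _ _ => rfl
        · have hsub : x - y ≠ 0 := sub_ne_zero.mpr hne
          have h := hinj (x - y) hsub i
          have hdiff : (∑ j, A i j * (((x - y) j : ℤ) : ℝ))
              = (∑ j, A i j * (x j : ℝ)) - ∑ j, A i j * (y j : ℝ) := by
            rw [← Finset.sum_sub_distrib]
            refine Finset.sum_congr rfl fun j _ => ?_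
            have hxy : (x - y) j = x j - y j := rfl
            rw [hxy]; push_cast; ring
          rw [hdiff] at h
          rcases (sub_ne_zero.mp h).lt_or_gt with h1 | h1
          · exact fun h _ => absurd h1 h
          · exact fun _ h => absurd h1 h
      irrefl := fun x => lt_irrefl _
      trans := fun x y z h1 h2 => lt_trans h1 h2 }
  · intro i x y g hlt
    have key : ∀ u : Fin m → ℤ, (∑ j, A i j * (((u + g) j : ℤ) : ℝ))
        = (∑ j, A i j * (u j : ℝ)) + ∑ j, A i j * (g j : ℝ) := by
      intro u
      rw [← Finset.sum_add_distrib]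
      refine Finset.sum_congr rfl fun j _ => ?_
      have hug : (u + g) j = u j + g j := rfl
      rw [hug]; push_cast; ring
    show (∑ j, A i j * (((x + g) j : ℤ) : ℝ)) < ∑ j, A i j * (((y + g) j : ℤ) : ℝ)
    rw [key x, key y]
    have hlt' : (∑ j, A i j * (x j : ℝ)) < ∑ j, A i j * (y j : ℝ) := hlt
    linarith
  · intro x y hxy
    haveI : Nonempty (Fin n) := ⟨⟨0, hn⟩⟩
    have hNne : (Finset.univ : Finset (Fin n)).Nonempty := Finset.univ_nonempty
    have hgap : ∀ i, (∑ j, A i j * (x i j : ℝ)) < ∑ j, A i j * (y i j : ℝ) := hxy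
    set δ : ℝ := Finset.univ.inf' hNne
      (fun i => (∑ j, A i j * (y i j : ℝ)) - ∑ j, A i j * (x i j : ℝ)) with hδdef
    have hδpos : 0 < δ :=
      (Finset.lt_inf'_iff hNne).mpr fun i _ => sub_pos.mpr (hgap i)
    obtain ⟨q, hq1, hq2⟩ := exists_rat_btwn (show (0:ℝ) < δ/2 by linarith)
    have hq0 : 0 < q := by exact_mod_cast hq1
    have ht : ∀ i, ∃ tq : ℚ, (∑ j, A i j * (x i j : ℝ)) + (q:ℝ) < (tq:ℝ)
        ∧ (tq:ℝ) < (∑ j, A i j * (y i j : ℝ)) - (q:ℝ) := by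
      intro i
      have hle : δ ≤ (∑ j, A i j * (y i j : ℝ)) - ∑ j, A i j * (x i j : ℝ) :=
        Finset.inf'_le (f := fun i => (∑ j, A i j * (y i j : ℝ)) - ∑ j, A i j * (x i j : ℝ))
          (Finset.mem_univ i)
      have hlt2 : (∑ j, A i j * (x i j : ℝ)) + (q:ℝ)
          < (∑ j, A i j * (y i j : ℝ)) - (q:ℝ) := by linarith
      obtain ⟨tq, h1, h2⟩ := exists_rat_btwn hlt2
      exact ⟨tq, h1, h2⟩
    choose tv htv1 htv2 using ht
    obtain ⟨w, hw⟩ := hdense tv q hq0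
    refine ⟨w, fun i => ⟨?_, ?_⟩⟩
    · have h := abs_lt.mp (hw i)
      have h1 := htv1 i
      show (∑ j, A i j * (x i j : ℝ)) < ∑ j, A i j * (w j : ℝ)
      linarith
    · have h := abs_lt.mp (hw i)
      have h2 := htv2 i
      show (∑ j, A i j * (w j : ℝ)) < ∑ j, A i j * (y i j : ℝ)
      linarith
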